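/- Let (Ω, 𝔉, μ) be a probability space, let Θ ⊆ ℝ^p be a nonempty compact set, and let Q₀ : Θ → ℝ be continuous and uniquely maximized at θ₀ ∈ Θ (i.e. Q₀(θ) < Q₀(θ₀) for every θ ∈ Θ with θ ≠ θ₀). For each n ∈ ℕ let Q_n, Q̃_n : Ω × Θ → ℝ be such that Q̃_n(ω, ·) is continuous on Θ for every ω, and let θ̂_n : Ω → Θ satisfy Q̃_n(ω, θ̂_n(ω)) = sup_{θ∈Θ} Q̃_n(ω, θ) for every ω. Assume the maps ω ↦ sup_{θ∈Θ}|Q_n(ω,θ) − Q₀(θ)|, ω ↦ sup_{θ∈Θ}|Q̃_n(ω,θ) − Q_n(ω,θ)| and ω ↦ ‖θ̂_n(ω) − θ₀‖ are measurable, and that sup_{θ∈Θ}|Q_n − Q₀| → 0 in probability and sup_{θ∈Θ}|Q̃_n − Q_n| → 0 in probability as n → ∞. Then θ̂_n converges in probability to θ₀, i.e. for every ε > 0, μ{ω : ‖θ̂_n(ω) − θ₀‖ > ε} → 0 as n → ∞. -/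

import Mathlib

open MeasureTheory Filter Topology

/-- Theorem 2 of the paper: consistency of the approximated M-estimator. -/
theorem stmt_0 {p : ℕ} {Ω : Type*} [MeasurableSpace Ω] (μ : Measure Ω) [IsProbabilityMeasure μ]
    {Θ : Set (EuclideanSpace ℝ (Fin p))} (hΘne : Θ.Nonempty) (hΘcpt : IsCompact Θ)
    (Q0 : EuclideanSpace ℝ (Fin p) → ℝ) (hQ0cont : ContinuousOn Q0 Θ)
    (θ0 : EuclideanSpace ℝ (Fin p)) (hθ0 : θ0 ∈ Θ)
    (hθ0max : ∀ θ ∈ Θ, θ ≠ θ0 → Q0 θ < Q0 θ0)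
    (Q Qt : ℕ → Ω → EuclideanSpace ℝ (Fin p) → ℝ)
    (hQtcont : ∀ n ω, ContinuousOn (Qt n ω) Θ)
    (θhat : ℕ → Ω → EuclideanSpace ℝ (Fin p))
    (hθhatmem : ∀ n ω, θhat n ω ∈ Θ)
    (hθhatmax : ∀ n ω, Qt n ω (θhat n ω) = sSup (Qt n ω '' Θ))
    (hbdd1 : ∀ n ω, BddAbove ((fun θ => |Q n ω θ - Q0 θ|) '' Θ))
    (hbdd2 : ∀ n ω, BddAbove ((fun θ => |Qt n ω θ - Q n ω θ|) '' Θ))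
    (hmeas1 : ∀ n, Measurable fun ω => sSup ((fun θ => |Q n ω θ - Q0 θ|) '' Θ))
    (hmeas2 : ∀ n, Measurable fun ω => sSup ((fun θ => |Qt n ω θ - Q n ω θ|) '' Θ))
    (hmeas3 : ∀ n, Measurable fun ω => ‖θhat n ω - θ0‖)
    (hplim1 : ∀ ε > (0 : ℝ), Tendsto
      (fun n => μ {ω | ε < sSup ((fun θ => |Q n ω θ - Q0 θ|) '' Θ)}) atTop (𝓝 0))
    (hplim2 : ∀ ε > (0 : ℝ), Tendsto
      (fun n => μ {ω | ε < sSup ((fun θ => |Qt n ω θ - Q n ω θ|) '' Θ)}) atTop (𝓝 0)) :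
    ∀ ε > (0 : ℝ), Tendsto (fun n => μ {ω | ε < ‖θhat n ω - θ0‖}) atTop (𝓝 0) := by
  intro ε hε
  set K : Set (EuclideanSpace ℝ (Fin p)) := Θ ∩ {θ | ε ≤ ‖θ - θ0‖} with hKdef
  by_cases hKne : K.Nonempty
  · have hKcl : IsClosed {θ : EuclideanSpace ℝ (Fin p) | ε ≤ ‖θ - θ0‖} :=
      isClosed_le continuous_const ((continuous_id.sub continuous_const).norm)
    have hKcpt : IsCompact K := hΘcpt.inter_right hKcl
    obtain ⟨θ1, hθ1K, hθ1max⟩ := hKcpt.exists_isMaxOn hKne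
      (hQ0cont.mono Set.inter_subset_left)
    have hθ1ne : θ1 ≠ θ0 := by
      intro h
      have := hθ1K.2
      rw [h] at this
      simp only [Set.mem_setOf_eq, sub_self, norm_zero] at this
      linarith
    have hδ : Q0 θ1 < Q0 θ0 := hθ0max θ1 hθ1K.1 hθ1ne
    set η : ℝ := (Q0 θ0 - Q0 θ1) / 5 with hηdef
    have hη : 0 < η := by rw [hηdef]; linarith
    have hsub : ∀ n, {ω | ε < ‖θhat n ω - θ0‖} ⊆
        {ω | η < sSup ((fun θ => |Q n ω θ - Q0 θ|) '' Θ)} ∪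
        {ω | η < sSup ((fun θ => |Qt n ω θ - Q n ω θ|) '' Θ)} := by
      intro n ω hω
      simp only [Set.mem_setOf_eq] at hω
      by_contra hcon
      simp only [Set.mem_union, Set.mem_setOf_eq, not_or, not_lt] at hcon
      obtain ⟨hS1, hS2⟩ := hcon
      set S1 := sSup ((fun θ => |Q n ω θ - Q0 θ|) '' Θ) with hS1def
      set S2 := sSup ((fun θ => |Qt n ω θ - Q n ω θ|) '' Θ) with hS2def
      have ha1 : |Q n ω θ0 - Q0 θ0| ≤ S1 := le_csSup (hbdd1 n ω) ⟨θ0, hθ0, rfl⟩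
      have ha2 : |Qt n ω θ0 - Q n ω θ0| ≤ S2 := le_csSup (hbdd2 n ω) ⟨θ0, hθ0, rfl⟩
      have ha3 : |Q n ω (θhat n ω) - Q0 (θhat n ω)| ≤ S1 :=
        le_csSup (hbdd1 n ω) ⟨θhat n ω, hθhatmem n ω, rfl⟩
      have ha4 : |Qt n ω (θhat n ω) - Q n ω (θhat n ω)| ≤ S2 :=
        le_csSup (hbdd2 n ω) ⟨θhat n ω, hθhatmem n ω, rfl⟩
      have hbddQt : BddAbove (Qt n ω '' Θ) :=
        (hΘcpt.image_of_continuousOn (hQtcont n ω)).bddAbove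
      have ha5 : Qt n ω θ0 ≤ Qt n ω (θhat n ω) := by
        rw [hθhatmax n ω]
        exact le_csSup hbddQt ⟨θ0, hθ0, rfl⟩
      have hmemK : θhat n ω ∈ K := ⟨hθhatmem n ω, le_of_lt hω⟩
      have ha6 : Q0 (θhat n ω) ≤ Q0 θ1 := hθ1max hmemK
      rw [abs_le] at ha1 ha2 ha3 ha4
      have : Q0 θ0 - Q0 θ1 = 5 * η := by rw [hηdef]; ring
      linarith [ha1.1, ha1.2, ha2.1, ha2.2, ha3.1, ha3.2, ha4.1, ha4.2]
    have h1 := hplim1 η hη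
    have h2 := hplim2 η hη
    have hadd : Tendsto (fun n => μ {ω | η < sSup ((fun θ => |Q n ω θ - Q0 θ|) '' Θ)} +
        μ {ω | η < sSup ((fun θ => |Qt n ω θ - Q n ω θ|) '' Θ)}) atTop (𝓝 0) := by
      have := h1.add h2
      simpa using this
    refine tendsto_of_tendsto_of_tendsto_of_le_of_le tendsto_const_nhds hadd
      (fun n => zero_le) (fun n => ?_)
    exact le_trans (measure_mono (hsub n)) (measure_union_le _ _)
  · have hempty : ∀ n, {ω | ε < ‖θhat n ω - θ0‖} = ∅ := by
      intro n
      ext ω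
      simp only [Set.mem_setOf_eq, Set.mem_empty_iff_false, iff_false, not_lt]
      by_contra h
      push_neg at h
      exact hKne ⟨θhat n ω, hθhatmem n ω, le_of_lt h⟩
    simp only [hempty, measure_empty]
    exact tendsto_const_nhds
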